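/- lim_{n→∞} ∏_{k=1}^{n} (4(n-1)^4 - (8k-6)(n-1)^2 + 4k^2 - 6k + 2)/(n(n-1)(2n-1)^2) = e^{-3}. -/

import Mathlib

open Filter Finset

noncomputable def pnum (x y : ℝ) : ℝ :=
  4 * (x - 1) ^ 4 - (8 * y - 6) * (x - 1) ^ 2 + 4 * y ^ 2 - 6 * y + 2

noncomputable def pden (x : ℝ) : ℝ := x * (x - 1) * (2 * x - 1) ^ 2

lemma pden_ge {x : ℝ} (hx : 4 ≤ x) : 2 * x ^ 4 ≤ pden x := by
  unfold pden; nlinarith [sq_nonneg x, sq_nonneg (x - 4)]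

lemma pden_pos {x : ℝ} (hx : 4 ≤ x) : 0 < pden x := by
  have := pden_ge hx
  nlinarith [pow_pos (show (0:ℝ) < x by linarith) 4]

lemma pnum_sub_bound {x y : ℝ} (hx : 1 ≤ x) (hy1 : 1 ≤ y) (hy2 : y ≤ x) :
    |pnum x y - pden x| ≤ 114 * x ^ 3 := by
  have h : pnum x y - pden x =
      (-8*x^3 + 25*x^2 - 27*x + 12) + y * (-8*x^2 + 16*x - 14) + 4*y^2 := by
    unfold pnum pden; ring
  rw [h, abs_le]
  constructor <;> nlinarith [sq_nonneg (x - y), sq_nonneg y, sq_nonneg x, sq_nonneg (x*y),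
    mul_le_mul_of_nonneg_left hy2 (le_trans zero_le_one hy1),
    sq_nonneg (x - 1), sq_nonneg (y - 1), mul_pos (lt_of_lt_of_le zero_lt_one hy1) (lt_of_lt_of_le zero_lt_one hx)]

lemma u_bound {x y : ℝ} (hx : 114 ≤ x) (hy1 : 1 ≤ y) (hy2 : y ≤ x) :
    |pnum x y / pden x - 1| ≤ 57 / x := by
  have hx4 : (4:ℝ) ≤ x := by linarith
  have hd := pden_pos hx4
  have hd' : pden x ≠ 0 := ne_of_gt hd
  have h : pnum x y / pden x - 1 = (pnum x y - pden x) / pden x := by field_simp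
  rw [h, abs_div, abs_of_pos hd, div_le_div_iff₀ hd (by linarith : (0:ℝ) < x)]
  have h1 := pnum_sub_bound (by linarith) hy1 hy2
  have h2 := pden_ge hx4
  calc |pnum x y - pden x| * x ≤ 114 * x ^ 3 * x := by
        apply mul_le_mul_of_nonneg_right h1 (by linarith)
    _ = 57 * (2 * x ^ 4) := by ring
    _ ≤ 57 * pden x := by nlinarith

lemma exp_lb {v : ℝ} (h : |v| ≤ 1/2) : Real.exp (v - 2 * v ^ 2) ≤ 1 + v := by
  obtain ⟨h1, h2⟩ := abs_le.mp h
  have hv : (0:ℝ) < 1 + v := by linarith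
  have hlog : 1 - (1 + v)⁻¹ ≤ Real.log (1 + v) := Real.one_sub_inv_le_log_of_pos hv
  have key : v - 2 * v ^ 2 ≤ 1 - (1 + v)⁻¹ := by
    have h3 : 1 - (1 + v)⁻¹ = v / (1 + v) := by field_simp; ring
    rw [h3, le_div_iff₀ hv]
    nlinarith [sq_nonneg v]
  calc Real.exp (v - 2 * v ^ 2) ≤ Real.exp (Real.log (1 + v)) :=
        Real.exp_le_exp.mpr (le_trans key hlog)
    _ = 1 + v := Real.exp_log hv

lemma sumIcc_id (n : ℕ) : ∑ k ∈ Icc 1 n, (k : ℝ) = n * (n + 1) / 2 := by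
  induction n with
  | zero => simp
  | succ m ih =>
    rw [Finset.sum_Icc_succ_top (Nat.le_add_left 1 m), ih]
    push_cast; ring

lemma sumIcc_sq (n : ℕ) : ∑ k ∈ Icc 1 n, (k : ℝ)^2 = n * (n + 1) * (2*n + 1) / 6 := by
  induction n with
  | zero => simp
  | succ m ih =>
    rw [Finset.sum_Icc_succ_top (Nat.le_add_left 1 m), ih]
    push_cast; ring

lemma sum_diff (n : ℕ) :
    ∑ k ∈ Icc 1 n, (pnum n k - pden n) =
      -12 * (n:ℝ)^4 + (91/3) * n^3 - 24 * n^2 + (17/3) * n := by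
  have h : ∀ k ∈ Icc 1 n, pnum (n:ℝ) (k:ℕ) - pden n =
      (-8*(n:ℝ)^3 + 25*(n:ℝ)^2 - 27*n + 12) * 1 + (-8*(n:ℝ)^2 + 16*n - 14) * k + 4*(k:ℝ)^2 := by
    intro k _; unfold pnum pden; ring
  rw [Finset.sum_congr rfl h]
  rw [Finset.sum_add_distrib, Finset.sum_add_distrib, ← Finset.mul_sum, ← Finset.mul_sum,
    ← Finset.mul_sum, sumIcc_id, sumIcc_sq, Finset.sum_const, Nat.card_Icc]
  simp only [nsmul_eq_mul, mul_one]
  push_cast [Nat.cast_sub]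
  ring

lemma sum_u_eq {n : ℕ} (hn : 4 ≤ n) :
    ∑ k ∈ Icc 1 n, (pnum n k / pden n - 1) =
      (-12 + (91/3) * (1/(n:ℝ)) - 24 * (1/(n:ℝ))^2 + (17/3) * (1/(n:ℝ))^3) /
        (4 - 8 * (1/(n:ℝ)) + 5 * (1/(n:ℝ))^2 - (1/(n:ℝ))^3) := by
  have hx : (4:ℝ) ≤ (n:ℝ) := by exact_mod_cast hn
  have hx0 : (n:ℝ) ≠ 0 := by linarith
  have hd : 0 < pden n := pden_pos hx
  have hd' : pden (n:ℝ) ≠ 0 := ne_of_gt hd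
  have hD : (4 - 8 * (1/(n:ℝ)) + 5 * (1/(n:ℝ))^2 - (1/(n:ℝ))^3) = pden n / (n:ℝ)^4 := by
    unfold pden; field_simp; ring
  have hD' : (4 - 8 * (1/(n:ℝ)) + 5 * (1/(n:ℝ))^2 - (1/(n:ℝ))^3) ≠ 0 := by
    rw [hD]
    positivity
  have step1 : ∑ k ∈ Icc 1 n, (pnum n k / pden n - 1) =
      (∑ k ∈ Icc 1 n, (pnum n k - pden n)) / pden n := by
    rw [Finset.sum_div]
    apply Finset.sum_congr rfl
    intro k _
    field_simp
  rw [step1, sum_diff, div_eq_div_iff hd' hD', hD]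
  unfold pden
  field_simp

lemma tendsto_main_sum :
    Tendsto (fun n : ℕ => ∑ k ∈ Icc 1 n, (pnum n k / pden n - 1)) atTop (nhds (-3)) := by
  have t : Tendsto (fun n : ℕ => 1/(n:ℝ)) atTop (nhds 0) := tendsto_one_div_atTop_nhds_zero_nat
  have hnum : Tendsto (fun n : ℕ =>
      -12 + (91/3) * (1/(n:ℝ)) - 24 * (1/(n:ℝ))^2 + (17/3) * (1/(n:ℝ))^3) atTop
      (nhds (-12 + (91/3) * 0 - 24 * 0^2 + (17/3) * 0^3)) := by
    exact (((tendsto_const_nhds.add (t.const_mul _)).sub ((t.pow 2).const_mul _)).add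
      ((t.pow 3).const_mul _))
  have hden : Tendsto (fun n : ℕ =>
      4 - 8 * (1/(n:ℝ)) + 5 * (1/(n:ℝ))^2 - (1/(n:ℝ))^3) atTop
      (nhds (4 - 8 * 0 + 5 * 0^2 - 0^3)) := by
    exact ((tendsto_const_nhds.sub (t.const_mul _)).add ((t.pow 2).const_mul _)).sub (t.pow 3)
  have hdiv := hnum.div hden (by norm_num)
  have h3 : (-12 + (91/3) * (0:ℝ) - 24 * 0^2 + (17/3) * 0^3) / (4 - 8 * 0 + 5 * 0^2 - 0^3)
      = -3 := by norm_num
  rw [h3] at hdiv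
  apply hdiv.congr' _
  filter_upwards [eventually_ge_atTop 4] with n hn
  exact (sum_u_eq hn).symm

lemma tendsto_err :
    Tendsto (fun n : ℕ => ∑ k ∈ Icc 1 n, 2 * (pnum n k / pden n - 1)^2) atTop (nhds 0) := by
  have tupper : Tendsto (fun n : ℕ => (6498:ℝ)/(n:ℝ)) atTop (nhds 0) :=
    tendsto_const_div_atTop_nhds_zero_nat 6498
  apply tendsto_of_tendsto_of_tendsto_of_le_of_le' tendsto_const_nhds tupper
  · filter_upwards with n
    exact Finset.sum_nonneg fun k _ => by positivity
  · filter_upwards [eventually_ge_atTop 114] with n hn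
    have hx : (114:ℝ) ≤ (n:ℝ) := by exact_mod_cast hn
    have hx0 : (0:ℝ) < (n:ℝ) := by linarith
    have hb : ∀ k ∈ Icc 1 n, 2 * (pnum n k / pden n - 1)^2 ≤ 2 * (57/(n:ℝ))^2 := by
      intro k hk
      rw [Finset.mem_Icc] at hk
      have hy1 : (1:ℝ) ≤ (k:ℝ) := by exact_mod_cast hk.1
      have hy2 : (k:ℝ) ≤ (n:ℝ) := by exact_mod_cast hk.2
      have hu := u_bound hx hy1 hy2
      nlinarith [sq_abs (pnum n k / pden n - 1), abs_nonneg (pnum n k / pden n - 1)]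
    calc ∑ k ∈ Icc 1 n, 2 * (pnum n k / pden n - 1)^2
        ≤ (Icc 1 n).card • (2 * (57/(n:ℝ))^2) := Finset.sum_le_card_nsmul _ _ _ hb
      _ = (n:ℝ) * (2 * (57/(n:ℝ))^2) := by rw [Nat.card_Icc]; simp
      _ = 6498/(n:ℝ) := by field_simp; ring

theorem stmt_15 :
    Tendsto (fun n : ℕ =>
        ∏ k ∈ Finset.Icc 1 n,
          (4 * ((n : ℝ) - 1) ^ 4 - (8 * k - 6) * ((n : ℝ) - 1) ^ 2 +
              4 * (k : ℝ) ^ 2 - 6 * k + 2) / ((n : ℝ) * (n - 1) * (2 * n - 1) ^ 2))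
      atTop (nhds (Real.exp (-3))) := by
  have hP : ∀ n : ℕ, (∏ k ∈ Finset.Icc 1 n,
      (4 * ((n : ℝ) - 1) ^ 4 - (8 * k - 6) * ((n : ℝ) - 1) ^ 2 +
        4 * (k : ℝ) ^ 2 - 6 * k + 2) / ((n : ℝ) * (n - 1) * (2 * n - 1) ^ 2)) =
      ∏ k ∈ Finset.Icc 1 n, pnum n k / pden n := by
    intro n; apply Finset.prod_congr rfl; intro k _; unfold pnum pden; ring_nf
  simp only [hP]
  have tlow : Tendsto (fun n : ℕ => Real.exp (∑ k ∈ Icc 1 n,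
      ((pnum n k / pden n - 1) - 2 * (pnum n k / pden n - 1)^2))) atTop
      (nhds (Real.exp (-3))) := by
    have : Tendsto (fun n : ℕ => ∑ k ∈ Icc 1 n,
        ((pnum n k / pden n - 1) - 2 * (pnum n k / pden n - 1)^2)) atTop (nhds (-3)) := by
      have h := tendsto_main_sum.sub tendsto_err
      rw [sub_zero] at h
      apply h.congr
      intro n
      rw [← Finset.sum_sub_distrib]
    exact (Real.continuous_exp.tendsto _).comp this
  have thigh : Tendsto (fun n : ℕ => Real.exp (∑ k ∈ Icc 1 n,
      (pnum n k / pden n - 1))) atTop (nhds (Real.exp (-3))) :=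
    (Real.continuous_exp.tendsto _).comp tendsto_main_sum
  apply tendsto_of_tendsto_of_tendsto_of_le_of_le' tlow thigh
  · filter_upwards [eventually_ge_atTop 114] with n hn
    have hx : (114:ℝ) ≤ (n:ℝ) := by exact_mod_cast hn
    rw [Real.exp_sum]
    apply Finset.prod_le_prod
    · intro k _; positivity
    · intro k hk
      rw [Finset.mem_Icc] at hk
      have hy1 : (1:ℝ) ≤ (k:ℝ) := by exact_mod_cast hk.1
      have hy2 : (k:ℝ) ≤ (n:ℝ) := by exact_mod_cast hk.2
      have hu := u_bound hx hy1 hy2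
      have hu2 : |pnum n k / pden n - 1| ≤ 1/2 := by
        refine le_trans hu ?_
        rw [div_le_iff₀ (by linarith : (0:ℝ) < (n:ℝ))]
        linarith
      have := exp_lb hu2
      calc Real.exp ((pnum n k / pden n - 1) - 2 * (pnum n k / pden n - 1)^2)
          ≤ 1 + (pnum n k / pden n - 1) := this
        _ = pnum n k / pden n := by ring
  · filter_upwards [eventually_ge_atTop 114] with n hn
    have hx : (114:ℝ) ≤ (n:ℝ) := by exact_mod_cast hn
    rw [Real.exp_sum]
    apply Finset.prod_le_prod
    · intro k hk
      rw [Finset.mem_Icc] at hk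
      have hy1 : (1:ℝ) ≤ (k:ℝ) := by exact_mod_cast hk.1
      have hy2 : (k:ℝ) ≤ (n:ℝ) := by exact_mod_cast hk.2
      have hu := u_bound hx hy1 hy2
      have h12 : 57/(n:ℝ) ≤ 1/2 := by
        rw [div_le_iff₀ (by linarith : (0:ℝ) < (n:ℝ))]; linarith
      have := abs_le.mp (le_trans hu h12)
      linarith [this.1]
    · intro k _
      have := Real.add_one_le_exp (pnum n k / pden n - 1)
      linarith
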